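/- arXiv:2404.13529 — 6 statements merged into one kernel-verified Lean document; each statement's English description precedes it below -/
import Mathlib

section
/- Let G be an undirected graph on N vertices with Laplacian L = E Eᵀ for an incidence matrix E, let M ∈ ℝ^{m×m} satisfy M + Mᵀ ⪯ 0, and let F ∈ ℝ^{Nm×Nm} be block diagonal with blocks F_i satisfying F_i + F_iᵀ ⪯ 0. Then the symmetric part of F + L⊗M is negative semidefinite, i.e., vᵀ(F + L⊗M)v ≤ 0 for all v ∈ ℝ^{Nm}. -/
open Matrix
open scoped Kronecker

private lemma quad_nonpos {m : ℕ} (M : Matrix (Fin m) (Fin m) ℝ)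
    (hM : ∀ w : Fin m → ℝ, w ⬝ᵥ ((M + Mᵀ) *ᵥ w) ≤ 0) (w : Fin m → ℝ) :
    w ⬝ᵥ (M *ᵥ w) ≤ 0 := by
  have h := hM w
  rw [add_mulVec, dotProduct_add] at h
  have ht : w ⬝ᵥ (Mᵀ *ᵥ w) = w ⬝ᵥ (M *ᵥ w) := by
    rw [mulVec_transpose, dotProduct_comm, dotProduct_mulVec]
  linarith

private lemma block_quad_nonpos {n m : ℕ}
    (B : Fin n → Matrix (Fin m) (Fin m) ℝ)
    (hB : ∀ i, ∀ w : Fin m → ℝ, w ⬝ᵥ (B i *ᵥ w) ≤ 0)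
    (G : Matrix (Fin n × Fin m) (Fin n × Fin m) ℝ)
    (hG : ∀ p q, G p q = if p.1 = q.1 then B p.1 p.2 q.2 else 0)
    (v : Fin n × Fin m → ℝ) : v ⬝ᵥ (G *ᵥ v) ≤ 0 := by
  have key : v ⬝ᵥ (G *ᵥ v) = ∑ i, (fun a => v (i, a)) ⬝ᵥ (B i *ᵥ fun a => v (i, a)) := by
    simp only [dotProduct, mulVec, Fintype.sum_prod_type, hG, ite_mul, zero_mul]
    refine Finset.sum_congr rfl fun i _ => ?_
    refine Finset.sum_congr rfl fun a _ => ?_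
    congr 1
    rw [Finset.sum_comm]
    refine Finset.sum_congr rfl fun b _ => ?_
    rw [Finset.sum_eq_single i]
    · simp
    · intro j _ hj; simp [Ne.symm hj]
    · simp
  rw [key]
  exact Finset.sum_nonpos fun i _ => hB i _

/-- For an undirected graph with Laplacian `L = E Eᵀ`, `M` with
`M + Mᵀ ⪯ 0`, and blockdiagonal `F` with blocks `Fᵢ` satisfying `Fᵢ + Fᵢᵀ ⪯ 0`,
the symmetric part of `F + L ⊗ M` is negative semidefinite. -/
theorem symmetric_part_neg_semidef
    (N m ι : ℕ) (Einc : Matrix (Fin N) (Fin ι) ℝ)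
    (L : Matrix (Fin N) (Fin N) ℝ) (hL : L = Einc * Eincᵀ)
    (M : Matrix (Fin m) (Fin m) ℝ)
    (hM : ∀ w : Fin m → ℝ, w ⬝ᵥ ((M + Mᵀ) *ᵥ w) ≤ 0)
    (Fi : Fin N → Matrix (Fin m) (Fin m) ℝ)
    (hFi : ∀ i, ∀ w : Fin m → ℝ, w ⬝ᵥ ((Fi i + (Fi i)ᵀ) *ᵥ w) ≤ 0)
    (F : Matrix (Fin N × Fin m) (Fin N × Fin m) ℝ)
    (hF : ∀ p q, F p q = if p.1 = q.1 then Fi p.1 p.2 q.2 else 0) :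
    ∀ v : Fin N × Fin m → ℝ, v ⬝ᵥ ((F + L ⊗ₖ M) *ᵥ v) ≤ 0 := by
  intro v
  rw [add_mulVec, dotProduct_add]
  have hFpart : v ⬝ᵥ (F *ᵥ v) ≤ 0 :=
    block_quad_nonpos Fi (fun i => quad_nonpos (Fi i) (hFi i)) F hF v
  have hfact : L ⊗ₖ M =
      (Einc ⊗ₖ (1 : Matrix (Fin m) (Fin m) ℝ)) *
        (((1 : Matrix (Fin ι) (Fin ι) ℝ) ⊗ₖ M) *
          (Eincᵀ ⊗ₖ (1 : Matrix (Fin m) (Fin m) ℝ))) := by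
    rw [← Matrix.mul_kronecker_mul, ← Matrix.mul_kronecker_mul, hL]
    simp
  have hLpart : v ⬝ᵥ ((L ⊗ₖ M) *ᵥ v) ≤ 0 := by
    rw [hfact, ← mulVec_mulVec, ← mulVec_mulVec,
      dotProduct_mulVec]
    have hy : v ᵥ* (Einc ⊗ₖ (1 : Matrix (Fin m) (Fin m) ℝ)) =
        (Eincᵀ ⊗ₖ (1 : Matrix (Fin m) (Fin m) ℝ)) *ᵥ v := by
      rw [← mulVec_transpose, ← Matrix.kroneckerMap_transpose]
      simp
    rw [hy]
    set y := (Eincᵀ ⊗ₖ (1 : Matrix (Fin m) (Fin m) ℝ)) *ᵥ v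
    exact block_quad_nonpos (fun _ => M) (fun _ => quad_nonpos M hM) _
      (fun p q => by simp [Matrix.one_apply, ite_mul, zero_mul, boole_mul]) y
  linarith
end

section
/- Let φ: ℝⁿ → ℝⁿ satisfy the strict incremental passivity property (u − v)ᵀ(φ(u) − φ(v)) ≤ 0 with equality only when u = v, let S ∈ ℝⁿˣⁿ satisfy S + Sᵀ ⪯ 0, and let x* satisfy S∇H(x*) + φ(∇H(x*)) = 0 for a differentiable strongly convex H: ℝⁿ → ℝ. Then along any solution of ẋ = S∇H(x) + φ(∇H(x)), the function V(x) = H(x) − H(x*) − ∇H(x*)ᵀ(x − x*) satisfies V̇(x) ≤ 0, with V̇(x) = 0 only if ∇H(x) = ∇H(x*). -/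
open Matrix

/-- Auxiliary algebraic lemma. -/
theorem lyapunov_decrease_aux (n : ℕ) (S : Matrix (Fin n) (Fin n) ℝ)
    (hS : ∀ v : Fin n → ℝ, v ⬝ᵥ ((S + Sᵀ) *ᵥ v) ≤ 0)
    (φ : (Fin n → ℝ) → (Fin n → ℝ))
    (hφ : ∀ u v : Fin n → ℝ, (u - v) ⬝ᵥ (φ u - φ v) ≤ 0)
    (hφeq : ∀ u v : Fin n → ℝ, (u - v) ⬝ᵥ (φ u - φ v) = 0 → u = v)
    (g gs : Fin n → ℝ)
    (heq : S *ᵥ gs + φ gs = 0) :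
    (g - gs) ⬝ᵥ (S *ᵥ g + φ g) ≤ 0 ∧
      ((g - gs) ⬝ᵥ (S *ᵥ g + φ g) = 0 → g = gs) := by
  set d := g - gs with hd
  have key : d ⬝ᵥ (S *ᵥ g + φ g) = d ⬝ᵥ (S *ᵥ d) + d ⬝ᵥ (φ g - φ gs) := by
    have h0 : d ⬝ᵥ (S *ᵥ gs + φ gs) = 0 := by rw [heq]; simp
    have : S *ᵥ g + φ g = S *ᵥ d + (S *ᵥ gs + φ gs) + (φ g - φ gs) := by
      rw [hd, Matrix.mulVec_sub]; abel
    rw [this, dotProduct_add, dotProduct_add, h0]; ring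
  have hSd : d ⬝ᵥ (S *ᵥ d) ≤ 0 := by
    have h := hS d
    rw [Matrix.add_mulVec, dotProduct_add] at h
    have ht : d ⬝ᵥ (Sᵀ *ᵥ d) = d ⬝ᵥ (S *ᵥ d) := by
      rw [Matrix.mulVec_transpose, dotProduct_comm, Matrix.dotProduct_mulVec]
    linarith
  have hφd : d ⬝ᵥ (φ g - φ gs) ≤ 0 := hφ g gs
  constructor
  · rw [key]; linarith
  · intro h0
    rw [key] at h0
    exact hφeq g gs (by linarith)

/-- If `φ` is strictly incrementally passive, `S + Sᵀ ⪯ 0`, `H` is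
differentiable strongly convex, and `x*` is an equilibrium of
`ẋ = S∇H(x) + φ(∇H(x))`, then `V̇(x) = ∇V(x)ᵀ(S∇H(x) + φ(∇H(x))) ≤ 0`,
with equality only if `∇H(x) = ∇H(x*)`. -/
theorem lyapunov_decrease_continuous (n : ℕ) (μ : ℝ) (hμ : 0 < μ)
    (H : EuclideanSpace ℝ (Fin n) → ℝ) (hdiff : Differentiable ℝ H)
    (hsc : ∀ u v : EuclideanSpace ℝ (Fin n),
      H v ≥ H u + inner (𝕜 := ℝ) (gradient H u) (v - u) + μ / 2 * ‖v - u‖ ^ 2)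
    (S : Matrix (Fin n) (Fin n) ℝ)
    (hS : ∀ v : Fin n → ℝ, v ⬝ᵥ ((S + Sᵀ) *ᵥ v) ≤ 0)
    (φ : (Fin n → ℝ) → (Fin n → ℝ))
    (hφ : ∀ u v : Fin n → ℝ, (u - v) ⬝ᵥ (φ u - φ v) ≤ 0)
    (hφeq : ∀ u v : Fin n → ℝ, (u - v) ⬝ᵥ (φ u - φ v) = 0 → u = v)
    (xs : EuclideanSpace ℝ (Fin n))
    (heq : S *ᵥ (fun i => gradient H xs i) + φ (fun i => gradient H xs i) = 0) :
    ∀ x : EuclideanSpace ℝ (Fin n),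
      (fun i => gradient H x i - gradient H xs i) ⬝ᵥ
        (S *ᵥ (fun i => gradient H x i) + φ (fun i => gradient H x i)) ≤ 0 ∧
      ((fun i => gradient H x i - gradient H xs i) ⬝ᵥ
        (S *ᵥ (fun i => gradient H x i) + φ (fun i => gradient H x i)) = 0 →
        (fun i => gradient H x i) = (fun i => gradient H xs i)) := by
  intro x
  have h := lyapunov_decrease_aux n S hS φ hφ hφeq
    (fun i => gradient H x i) (fun i => gradient H xs i) heq
  have hsub : ((fun i => gradient H x i) - fun i => gradient H xs i)
      = fun i => gradient H x i - gradient H xs i := rfl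
  rw [hsub] at h
  exact h
end

section
/- Let G be a connected undirected graph on N vertices with Laplacian L, and let f_i: ℝᵐ → ℝ be differentiable. Suppose q* ∈ ℝ^{Nm} and p* ∈ ℝ^{Nm} satisfy 0 = −(L⊗I_m)q* − (L⊗I_m)p* − ∇f(q*) and 0 = (L⊗I_m)q*, where f(q) = Σᵢ f_i(q_i). Then q* = 𝟙_N ⊗ θ* for some θ* ∈ ℝᵐ satisfying Σᵢ ∇f_i(θ*) = 0. -/
open Matrix
open scoped Kronecker

lemma kron_mulVec_apply {N m : ℕ} (L : Matrix (Fin N) (Fin N) ℝ)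
    (v : Fin N × Fin m → ℝ) (i : Fin N) (a : Fin m) :
    ((L ⊗ₖ (1 : Matrix (Fin m) (Fin m) ℝ)) *ᵥ v) (i, a)
      = ∑ j, L i j * v (j, a) := by
  simp only [mulVec, dotProduct, Fintype.sum_prod_type, kroneckerMap_apply]
  rw [Finset.sum_congr rfl]
  intro j _
  rw [Finset.sum_eq_single a]
  · simp
  · intro b _ hb
    simp [Matrix.one_apply_ne (Ne.symm hb)]
  · simp

/-- For a connected graph with Laplacian `L` and differentiable `f_i`,
if `0 = −(L⊗I)q* − (L⊗I)p* − ∇f(q*)` and `0 = (L⊗I)q*`, then `q* = 𝟙 ⊗ θ*`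
with `Σᵢ ∇fᵢ(θ*) = 0`. -/
theorem equilibrium_is_optimal (N m : ℕ)
    (G : SimpleGraph (Fin N)) [DecidableRel G.Adj] (hconn : G.Connected)
    (f : Fin N → EuclideanSpace ℝ (Fin m) → ℝ) (hdiff : ∀ i, Differentiable ℝ (f i))
    (L : Matrix (Fin N) (Fin N) ℝ) (hL : L = G.lapMatrix ℝ)
    (qs ps : Fin N × Fin m → ℝ)
    (gradf : (Fin N × Fin m → ℝ) → Fin N × Fin m → ℝ)
    (hgradf : ∀ q : Fin N × Fin m → ℝ, ∀ i a,
      gradf q (i, a) = gradient (f i) (WithLp.toLp 2 (fun b => q (i, b))) a)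
    (heq1 : (0 : Fin N × Fin m → ℝ) =
      -((L ⊗ₖ (1 : Matrix (Fin m) (Fin m) ℝ)) *ᵥ qs)
        - (L ⊗ₖ (1 : Matrix (Fin m) (Fin m) ℝ)) *ᵥ ps - gradf qs)
    (heq2 : (L ⊗ₖ (1 : Matrix (Fin m) (Fin m) ℝ)) *ᵥ qs = 0) :
    ∃ θs : EuclideanSpace ℝ (Fin m),
      (∀ i a, qs (i, a) = θs a) ∧ (∀ a, (∑ i, gradient (f i) θs a) = 0) := by
  have hN : Nonempty (Fin N) := hconn.nonempty
  obtain ⟨i₀⟩ := hN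
  have hker : ∀ a : Fin m, ∀ i j : Fin N, qs (i, a) = qs (j, a) := by
    intro a
    have h0 : Matrix.toLin' (G.lapMatrix ℝ) (fun i => qs (i, a)) = 0 := by
      ext i
      have := congrFun heq2 (i, a)
      rw [kron_mulVec_apply] at this
      simpa [Matrix.toLin'_apply, mulVec, dotProduct, hL] using this
    intro i j
    exact (SimpleGraph.lapMatrix_mulVec_eq_zero_iff_forall_reachable G
      (x := fun i => qs (i, a))).mp (by simpa [Matrix.toLin'_apply] using h0) i j (hconn.preconnected i j)
  refine ⟨WithLp.toLp 2 (fun a => qs (i₀, a)), fun i a => hker a i i₀, ?_⟩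
  have hcolsum : ∀ j : Fin N, ∑ i, L i j = 0 := by
    intro j
    have hrow := congrFun (G.lapMatrix_mulVec_const_eq_zero (R := ℝ)) j
    have hsym : ∀ i, L i j = L j i := by
      intro i
      rw [hL]
      exact (Matrix.IsSymm.apply (G.isSymm_lapMatrix (R := ℝ)) i j).symm
    simp only [hsym]
    simpa [hL, mulVec, dotProduct] using hrow
  intro a
  have hθ : ∀ i : Fin N, gradient (f i) (WithLp.toLp 2 (fun b => qs (i₀, b))) a = gradf qs (i, a) := by
    intro i
    rw [hgradf]
    have he : (fun b => qs (i₀, b)) = (fun b => qs (i, b)) := funext fun b => hker b i₀ i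
    rw [he]
  have hgeq : ∀ i, gradf qs (i, a) = -((L ⊗ₖ (1 : Matrix (Fin m) (Fin m) ℝ)) *ᵥ ps) (i, a) := by
    intro i
    have := congrFun heq1 (i, a)
    have h2 := congrFun heq2 (i, a)
    simp only [Pi.zero_apply, Pi.sub_apply, Pi.neg_apply, h2] at this
    linarith
  calc ∑ i, gradient (f i) (WithLp.toLp 2 (fun b => qs (i₀, b))) a
      = ∑ i, -((L ⊗ₖ (1 : Matrix (Fin m) (Fin m) ℝ)) *ᵥ ps) (i, a) := by
        refine Finset.sum_congr rfl fun i _ => ?_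
        rw [hθ i, hgeq i]
    _ = -∑ j, (∑ i, L i j) * ps (j, a) := by
        simp only [kron_mulVec_apply, Finset.sum_neg_distrib]
        congr 1
        rw [Finset.sum_comm]
        simp [Finset.sum_mul]
    _ = 0 := by simp [hcolsum]
end

section
/- Let H: ℝⁿ → ℝ be differentiable and strongly convex, S ∈ ℝⁿˣⁿ with S + Sᵀ ⪯ 0, φ: ℝⁿ → ℝⁿ strictly incrementally passive, and x* the unique point with S∇H(x*) + φ(∇H(x*)) = 0. Let τ > 0 and suppose the sequence x[k] satisfies the implicit recursion (x⁺ − x)/τ = S ∇̄H(x, x⁺) + φ(∇̄H(x, x⁺)), where ∇̄H is the integral discrete gradient. Then V(x) = H(x) − H(x*) − ∇H(x*)ᵀ(x − x*) satisfies V(x⁺) − V(x) ≤ 0 for every step, with equality only when x = x⁺ = x*. -/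
open Matrix MeasureTheory intervalIntegral
open scoped RealInnerProductSpace

section aux
variable {n : ℕ}

lemma measurable_gradient (H : EuclideanSpace ℝ (Fin n) → ℝ) :
    Measurable (gradient H) := by
  have : gradient H = fun x => (InnerProductSpace.toDual ℝ _).symm (fderiv ℝ H x) := rfl
  rw [this]
  exact ((InnerProductSpace.toDual ℝ _).symm.continuous.measurable).comp
    (measurable_fderiv ℝ H)

lemma key_ftc (H : EuclideanSpace ℝ (Fin n) → ℝ) (μ : ℝ) (hμ : 0 < μ)
    (hdiff : Differentiable ℝ H)
    (hsc : ∀ u v : EuclideanSpace ℝ (Fin n),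
      H v ≥ H u + ⟪gradient H u, v - u⟫ + μ / 2 * ‖v - u‖ ^ 2)
    (u v : EuclideanSpace ℝ (Fin n)) :
    H v - H u = ⟪∫ s in (0:ℝ)..1, gradient H ((1 - s) • u + s • v), v - u⟫ := by
  set c := v - u with hc
  set γ : ℝ → EuclideanSpace ℝ (Fin n) := fun s => u + s • c with hγ
  have hγeq : ∀ s : ℝ, (1 - s) • u + s • v = γ s := by
    intro s; simp only [hγ, hc]; module
  -- bound on the gradient along a ball containing the segment
  obtain ⟨R, hR0, hRb⟩ : ∃ R : ℝ, 0 < R ∧ ∀ s ∈ Set.uIcc (0:ℝ) 1, ‖γ s‖ + 1 ≤ R := by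
    refine ⟨‖u‖ + ‖c‖ + 2, by positivity, ?_⟩
    intro s hs
    rw [Set.uIcc_of_le (by norm_num)] at hs
    have : ‖γ s‖ ≤ ‖u‖ + ‖c‖ := by
      calc ‖u + s • c‖ ≤ ‖u‖ + ‖s • c‖ := norm_add_le _ _
        _ ≤ ‖u‖ + ‖c‖ := by
            rw [norm_smul, Real.norm_eq_abs]
            have : |s| ≤ 1 := by rw [abs_le]; constructor <;> [linarith [hs.1]; exact hs.2]
            nlinarith [norm_nonneg c, abs_nonneg s]
    linarith
  have hK : IsCompact (Metric.closedBall (0 : EuclideanSpace ℝ (Fin n)) R) :=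
    isCompact_closedBall _ _
  have hKne : (Metric.closedBall (0 : EuclideanSpace ℝ (Fin n)) R).Nonempty :=
    ⟨0, by simp [hR0.le]⟩
  obtain ⟨M, hM⟩ := (hK.image hdiff.continuous).bddAbove
  obtain ⟨m, hm⟩ := (hK.image hdiff.continuous).bddBelow
  have hMm : ∀ y ∈ Metric.closedBall (0 : EuclideanSpace ℝ (Fin n)) R, H y ≤ M ∧ m ≤ H y := by
    intro y hy
    exact ⟨hM ⟨y, hy, rfl⟩, hm ⟨y, hy, rfl⟩⟩
  -- gradient bound
  have hgbound : ∀ y : EuclideanSpace ℝ (Fin n), ‖y‖ + 1 ≤ R → ‖gradient H y‖ ≤ M - m := by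
    intro y hy
    have hyK : y ∈ Metric.closedBall (0 : EuclideanSpace ℝ (Fin n)) R := by
      simp only [Metric.mem_closedBall, dist_zero_right]; linarith
    rcases eq_or_ne (gradient H y) 0 with h0 | h0
    · rw [h0, norm_zero]
      have := hMm y hyK
      linarith [this.1, this.2]
    · set d : EuclideanSpace ℝ (Fin n) := ‖gradient H y‖⁻¹ • gradient H y with hd
      have hnd : ‖d‖ = 1 := by
        rw [hd, norm_smul, norm_inv, norm_norm, inv_mul_cancel₀ (norm_ne_zero_iff.mpr h0)]
      have hydK : y + d ∈ Metric.closedBall (0 : EuclideanSpace ℝ (Fin n)) R := by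
        simp only [Metric.mem_closedBall, dist_zero_right]
        calc ‖y + d‖ ≤ ‖y‖ + ‖d‖ := norm_add_le _ _
          _ ≤ R := by rw [hnd]; linarith
      have := hsc y (y + d)
      have hsub : y + d - y = d := by abel
      rw [hsub] at this
      have hinner : ⟪gradient H y, d⟫ = ‖gradient H y‖ := by
        rw [hd, real_inner_smul_right, real_inner_self_eq_norm_sq, sq,
          inv_mul_cancel_left₀ (norm_ne_zero_iff.mpr h0)]
      have h1 := (hMm y hyK).2
      have h2 := (hMm (y + d) hydK).1
      rw [hinner, hnd] at this
      nlinarith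
  -- integrability
  have hmeas : Measurable (fun s : ℝ => gradient H (γ s)) :=
    (measurable_gradient H).comp (by fun_prop)
  have hint : IntervalIntegrable (fun s : ℝ => gradient H (γ s)) volume 0 1 := by
    rw [intervalIntegrable_iff]
    apply Integrable.mono' (g := fun _ : ℝ => M - m)
      ((integrableOn_const_iff (C := M - m)).mpr (Or.inr measure_Ioc_lt_top))
      (hmeas.aestronglyMeasurable.restrict)
    · filter_upwards [ae_restrict_mem measurableSet_uIoc] with s hs
      apply hgbound
      apply hRb
      exact Set.uIoc_subset_uIcc hs
  -- derivative along the segment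
  have hderiv : ∀ s : ℝ, HasDerivAt (fun t => H (γ t))
      ((InnerProductSpace.toDual ℝ _ (gradient H (γ s))) c) s := by
    intro s
    have hγd : HasDerivAt γ c s := by
      have : HasDerivAt (fun t : ℝ => t • c) ((1:ℝ) • c) s := (hasDerivAt_id s).smul_const c
      have h := this.const_add u
      simp only [one_smul] at h
      exact h
    exact ((hdiff (γ s)).hasGradientAt.hasFDerivAt).comp_hasDerivAt s hγd
  -- scalar integrability
  have hint' : IntervalIntegrable
      (fun s : ℝ => (InnerProductSpace.toDual ℝ _ (gradient H (γ s))) c) volume 0 1 := by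
    have := hint
    rw [intervalIntegrable_iff] at this ⊢
    have hb : Integrable (fun s : ℝ => ⟪c, gradient H (γ s)⟫) (volume.restrict (Set.uIoc (0:ℝ) 1)) :=
      (innerSL ℝ c).integrable_comp this
    refine hb.congr ?_
    filter_upwards with s
    rw [InnerProductSpace.toDual_apply_apply]
    exact (real_inner_comm _ _).symm
  have hFTC := integral_eq_sub_of_hasDerivAt (f := fun t => H (γ t))
    (fun t _ => hderiv t) hint'
  have hswap : (∫ s in (0:ℝ)..1, (InnerProductSpace.toDual ℝ _ (gradient H (γ s))) c)
      = ⟪∫ s in (0:ℝ)..1, gradient H (γ s), c⟫ := by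
    have : (∫ s in (0:ℝ)..1, (innerSL ℝ c) (gradient H (γ s)))
        = (innerSL ℝ c) (∫ s in (0:ℝ)..1, gradient H (γ s)) :=
      ContinuousLinearMap.intervalIntegral_comp_comm (innerSL ℝ c) hint
    simp only [innerSL_apply_apply] at this
    simp only [InnerProductSpace.toDual_apply_apply]
    rw [show (fun s => ⟪gradient H (γ s), c⟫) = fun s => ⟪c, gradient H (γ s)⟫ by
      funext s; exact real_inner_comm _ _]
    rw [this, real_inner_comm]
  have hγ0 : γ 0 = u := by simp [hγ]
  have hγ1 : γ 1 = v := by simp [hγ, hc]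
  simp only [hγ0, hγ1] at hFTC
  rw [← hFTC, hswap]
  congr 1
  apply intervalIntegral.integral_congr
  intro s _
  exact congrArg (gradient H) (hγeq s).symm

end aux

lemma inner_eq_dot {n : ℕ} (a b : EuclideanSpace ℝ (Fin n)) :
    ⟪a, b⟫ = (fun i => a i) ⬝ᵥ (fun i => b i) := by
  simp [PiLp.inner_apply, RCLike.inner_apply, dotProduct, mul_comm]

/-- Discrete-time Lyapunov decrease for the discrete-gradient scheme
`(x⁺ − x)/τ = S ∇̄H(x,x⁺) + φ(∇̄H(x,x⁺))`, for any step size `τ > 0`. -/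
theorem lyapunov_decrease_discrete (n : ℕ) (μ : ℝ) (hμ : 0 < μ)
    (H : EuclideanSpace ℝ (Fin n) → ℝ) (hdiff : Differentiable ℝ H)
    (hsc : ∀ u v : EuclideanSpace ℝ (Fin n),
      H v ≥ H u + ⟪gradient H u, v - u⟫ + μ / 2 * ‖v - u‖ ^ 2)
    (S : Matrix (Fin n) (Fin n) ℝ)
    (hS : ∀ v : Fin n → ℝ, v ⬝ᵥ ((S + Sᵀ) *ᵥ v) ≤ 0)
    (φ : (Fin n → ℝ) → (Fin n → ℝ))
    (hφ : ∀ u v : Fin n → ℝ, (u - v) ⬝ᵥ (φ u - φ v) ≤ 0)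
    (hφeq : ∀ u v : Fin n → ℝ, (u - v) ⬝ᵥ (φ u - φ v) = 0 → u = v)
    (xs : EuclideanSpace ℝ (Fin n))
    (heq : S *ᵥ (fun i => gradient H xs i) + φ (fun i => gradient H xs i) = 0)
    (huniq : ∀ y : EuclideanSpace ℝ (Fin n),
      S *ᵥ (fun i => gradient H y i) + φ (fun i => gradient H y i) = 0 → y = xs)
    (dH : EuclideanSpace ℝ (Fin n) → EuclideanSpace ℝ (Fin n) → EuclideanSpace ℝ (Fin n))
    (hdH : ∀ u v, dH u v = ∫ s in (0:ℝ)..1, gradient H ((1 - s) • u + s • v))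
    (τ : ℝ) (hτ : 0 < τ)
    (x : ℕ → EuclideanSpace ℝ (Fin n))
    (hrec : ∀ k, x (k + 1) - x k =
      τ • (S *ᵥ (fun i => dH (x k) (x (k + 1)) i) + φ (fun i => dH (x k) (x (k + 1)) i)))
    (V : EuclideanSpace ℝ (Fin n) → ℝ)
    (hV : ∀ y, V y = H y - H xs - ⟪gradient H xs, y - xs⟫) :
    ∀ k, V (x (k + 1)) - V (x k) ≤ 0 ∧
      (V (x (k + 1)) - V (x k) = 0 → x k = xs ∧ x (k + 1) = xs) := by
  intro k
  set u : EuclideanSpace ℝ (Fin n) := x k with hu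
  set v : EuclideanSpace ℝ (Fin n) := x (k + 1) with hv
  set g : EuclideanSpace ℝ (Fin n) := dH u v with hg
  set gs : EuclideanSpace ℝ (Fin n) := gradient H xs with hgs
  set g' : Fin n → ℝ := fun i => g i with hg'
  set gs' : Fin n → ℝ := fun i => gs i with hgs'
  set w : Fin n → ℝ := g' - gs' with hw
  -- FTC identity
  have hG : H v - H u = ⟪g, v - u⟫ := by
    rw [hg, hdH u v]
    exact key_ftc H μ hμ hdiff hsc u v
  -- recursion, pointwise
  have hvu : (fun i => (v - u) i) = τ • (S *ᵥ g' + φ g') := by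
    funext i
    exact congrFun (hrec k) i
  -- Lyapunov difference
  have hΔ : V v - V u = τ * (w ⬝ᵥ (S *ᵥ g' + φ g')) := by
    have h1 : ⟪gs, v - xs⟫ - ⟪gs, u - xs⟫ = ⟪gs, v - u⟫ := by
      rw [← inner_sub_right]
      congr 1
      abel
    have h2 : V v - V u = ⟪g - gs, v - u⟫ := by
      rw [hV v, hV u, inner_sub_left]
      linarith [h1, hG]
    rw [h2, inner_eq_dot]
    have h3 : (fun i => (g - gs) i) = w := by
      funext i; rfl
    rw [h3, hvu, dotProduct_smul, smul_eq_mul]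
  -- splitting
  have hsplit : w ⬝ᵥ (S *ᵥ g' + φ g')
      = w ⬝ᵥ (S *ᵥ w) + w ⬝ᵥ (φ g' - φ gs') := by
    have hgw : g' = w + gs' := by rw [hw]; abel
    have : S *ᵥ g' + φ g' = (S *ᵥ w + (φ g' - φ gs')) + (S *ᵥ gs' + φ gs') := by
      rw [hgw, Matrix.mulVec_add]
      abel
    rw [this, heq, add_zero, dotProduct_add]
  have hA : w ⬝ᵥ (S *ᵥ w) ≤ 0 := by
    have hsym : w ⬝ᵥ (Sᵀ *ᵥ w) = w ⬝ᵥ (S *ᵥ w) := by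
      rw [Matrix.dotProduct_mulVec, Matrix.vecMul_transpose, dotProduct_comm]
    have := hS w
    rw [Matrix.add_mulVec, dotProduct_add, hsym] at this
    linarith
  have hB : w ⬝ᵥ (φ g' - φ gs') ≤ 0 := hφ g' gs'
  have hle : V v - V u ≤ 0 := by
    rw [hΔ, hsplit]
    nlinarith
  refine ⟨hle, fun heq0 => ?_⟩
  -- equality case
  rw [hΔ, hsplit] at heq0
  have hAB : w ⬝ᵥ (S *ᵥ w) + w ⬝ᵥ (φ g' - φ gs') = 0 := by
    rcases mul_eq_zero.mp heq0 with h | h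
    · exact absurd h (ne_of_gt hτ)
    · exact h
  have hB0 : w ⬝ᵥ (φ g' - φ gs') = 0 := by linarith
  have hgg : g' = gs' := hφeq g' gs' hB0
  have hzero : S *ᵥ g' + φ g' = 0 := by rw [hgg]; exact heq
  have hveq : v = u := by
    have h4 : (fun i => (v - u) i) = (fun _ => (0:ℝ)) := by
      rw [hvu, hzero]
      funext i
      simp
    ext i
    have h5 : v i - u i = 0 := congrFun h4 i
    linarith
  have hgradu : gradient H u = g := by
    rw [hg, hveq, hdH u u]
    have hcc : ∀ s : ℝ, (1 - s) • u + s • u = u := by intro s; module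
    rw [show (fun s : ℝ => gradient H ((1 - s) • u + s • u)) = fun _ : ℝ => gradient H u by
      funext s; rw [hcc s]]
    rw [intervalIntegral.integral_const]
    simp
  have hgu' : (fun i => gradient H u i) = gs' := by
    rw [hgradu]
    exact hgg
  have hux : u = xs := huniq u (by rw [hgu']; exact heq)
  exact ⟨hux, by rw [hveq]; exact hux⟩
end

section
/- Let f: ℝᵐ → ℝ be differentiable and convex, G ∈ ℝ^{m×m} symmetric positive definite, q ∈ ℝᵐ, c ∈ ℝᵐ. Then there exists a unique q⁺ ∈ ℝᵐ satisfying G q⁺ + ∇f((q⁺ + q)/2) + c = 0. -/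
open Matrix

open InnerProductSpace
open scoped Gradient RealInnerProductSpace

/-- First-order condition: a convex differentiable function lies above its tangent. -/
lemma foc_aux {E : Type*} [NormedAddCommGroup E] [InnerProductSpace ℝ E] [CompleteSpace E]
    {F : E → ℝ} (hF : ConvexOn ℝ Set.univ F) {g x : E}
    (hg : HasGradientAt F g x) (y : E) : F x + ⟪g, y - x⟫ ≤ F y := by
  set φ : ℝ → ℝ := F ∘ (AffineMap.lineMap x y) with hφ
  have hφconv : ConvexOn ℝ Set.univ φ := by
    have := hF.comp_affineMap (AffineMap.lineMap x y)
    simpa using this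
  have hline : HasDerivAt (fun t : ℝ => AffineMap.lineMap x y t) (y - x) 0 := by
    have h : HasDerivAt (fun t : ℝ => t • (y - x) + x) ((1 : ℝ) • (y - x)) 0 :=
      ((hasDerivAt_id (0 : ℝ)).smul_const (y - x)).add_const x
    simpa [AffineMap.lineMap_apply, one_smul] using h
  have hφd : HasDerivAt φ ⟪g, y - x⟫ 0 := by
    have hgx : HasFDerivAt F (toDual ℝ E g) ((AffineMap.lineMap x y : ℝ → E) 0) := by
      simpa using hg.hasFDerivAt
    have := hgx.comp_hasDerivAt 0 hline
    simpa [hφ, toDual_apply_apply] using this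
  have hs := hφconv.le_slope_of_hasDerivAt (Set.mem_univ 0) (Set.mem_univ 1) zero_lt_one hφd
  have h0 : φ 0 = F x := by simp [hφ]
  have h1 : φ 1 = F y := by simp [hφ]
  rw [slope_def_field] at hs
  rw [h0, h1] at hs
  simp at hs
  linarith

set_option maxHeartbeats 1000000

/-- For `f` differentiable convex, `G` symmetric positive definite,
the implicit equation `G q⁺ + ∇f((q⁺+q)/2) + c = 0` has a unique solution. -/
theorem implicit_update_well_posed (m : ℕ)
    (f : EuclideanSpace ℝ (Fin m) → ℝ) (hdiff : Differentiable ℝ f)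
    (hconv : ConvexOn ℝ Set.univ f)
    (G : Matrix (Fin m) (Fin m) ℝ) (hGsym : G.IsSymm) (hGpd : G.PosDef)
    (q c : EuclideanSpace ℝ (Fin m)) :
    ∃! qp : EuclideanSpace ℝ (Fin m),
      ∀ a, (G *ᵥ fun b => qp b) a + gradient f ((2⁻¹ : ℝ) • (qp + q)) a + c a = 0 := by
  classical
  rcases Nat.eq_zero_or_pos m with hm | hm
  · subst hm
    refine ⟨0, fun a => a.elim0, fun y _ => ?_⟩
    ext a; exact a.elim0
  set Tl : (EuclideanSpace ℝ (Fin m)) →ₗ[ℝ] (EuclideanSpace ℝ (Fin m)) := Matrix.toEuclideanLin G with hTl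
  set T : (EuclideanSpace ℝ (Fin m)) →L[ℝ] (EuclideanSpace ℝ (Fin m)) := LinearMap.toContinuousLinearMap Tl with hT
  have hTapp : ∀ (x : (EuclideanSpace ℝ (Fin m))) (a : Fin m), T x a = (G *ᵥ fun b => x b) a := by
    intro x a; rfl
  have hsymm : ∀ x y : (EuclideanSpace ℝ (Fin m)), ⟪T x, y⟫ = ⟪x, T y⟫ := by
    have := (Matrix.isHermitian_iff_isSymmetric.mp hGpd.1)
    intro x y; exact this x y
  have hpos : ∀ x : (EuclideanSpace ℝ (Fin m)), x ≠ 0 → 0 < ⟪T x, x⟫ := by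
    intro x hx
    have hx' : (fun b => x b) ≠ 0 := by
      intro h; apply hx; ext a; exact congrFun h a
    have h2 := hGpd.dotProduct_mulVec_pos hx'
    have hinner : ⟪T x, x⟫ = ∑ a, x a * (G *ᵥ fun b => x b) a := by
      rw [PiLp.inner_apply]
      refine Finset.sum_congr rfl fun a _ => ?_
      rw [hTapp, RCLike.inner_apply]
      simp [mul_comm]
    rw [hinner]
    simpa [dotProduct] using h2
  set mid : (EuclideanSpace ℝ (Fin m)) → (EuclideanSpace ℝ (Fin m)) := fun x => (2⁻¹ : ℝ) • (x + q) with hmid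
  set Rf : (EuclideanSpace ℝ (Fin m)) → ℝ := fun x => 2 * f (mid x) + ⟪c, x⟫ with hRf
  set Qf : (EuclideanSpace ℝ (Fin m)) → ℝ := fun x => 2⁻¹ * ⟪T x, x⟫ with hQf
  set Fobj : (EuclideanSpace ℝ (Fin m)) → ℝ := fun x => Qf x + Rf x with hFobj
  have hgradf : ∀ (y v : (EuclideanSpace ℝ (Fin m))), ⟪∇ f y, v⟫ = fderiv ℝ f y v := by
    intro y v
    rw [gradient, ← toDual_apply_apply, LinearIsometryEquiv.apply_symm_apply]
  -- derivative of the quadratic part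
  have hQd : ∀ x : (EuclideanSpace ℝ (Fin m)), HasFDerivAt Qf (toDual ℝ (EuclideanSpace ℝ (Fin m)) (T x)) x := by
    intro x
    have h1 : HasFDerivAt (fun y : (EuclideanSpace ℝ (Fin m)) => ⟪T y, y⟫)
        ((fderivInnerCLM ℝ (T x, x)).comp
          ((T : (EuclideanSpace ℝ (Fin m)) →L[ℝ] (EuclideanSpace ℝ (Fin m))).prod (ContinuousLinearMap.id ℝ (EuclideanSpace ℝ (Fin m))))) x :=
      (T.hasFDerivAt).inner ℝ (hasFDerivAt_id x)
    have h2 := h1.const_mul (2⁻¹ : ℝ)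
    refine h2.congr_fderiv ?_
    ext v
    have hs : ⟪T v, x⟫ = ⟪T x, v⟫ := by rw [hsymm v x, real_inner_comm]
    simp [fderivInnerCLM_apply, toDual_apply_apply, hs]
    ring
  -- derivative of the rest
  have hRd : ∀ x : (EuclideanSpace ℝ (Fin m)), HasFDerivAt Rf (toDual ℝ (EuclideanSpace ℝ (Fin m)) (∇ f (mid x) + c)) x := by
    intro x
    have hmd : HasFDerivAt mid ((2⁻¹ : ℝ) • ContinuousLinearMap.id ℝ (EuclideanSpace ℝ (Fin m))) x := by
      have h : HasFDerivAt (fun y : (EuclideanSpace ℝ (Fin m)) => (2⁻¹ : ℝ) • (y + q))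
          ((2⁻¹ : ℝ) • ContinuousLinearMap.id ℝ (EuclideanSpace ℝ (Fin m))) x := by
        exact ((hasFDerivAt_id x).add_const q).const_smul (2⁻¹ : ℝ)
      simpa [hmid] using h
    have h1 : HasFDerivAt (fun y : (EuclideanSpace ℝ (Fin m)) => f (mid y))
        ((fderiv ℝ f (mid x)).comp ((2⁻¹ : ℝ) • ContinuousLinearMap.id ℝ (EuclideanSpace ℝ (Fin m)))) x := by
      exact ((hdiff (mid x)).hasFDerivAt).comp x hmd
    have h2 := h1.const_mul (2 : ℝ)
    have h3 : HasFDerivAt (fun y : (EuclideanSpace ℝ (Fin m)) => ⟪c, y⟫) (innerSL ℝ c) x := by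
      simpa using (innerSL ℝ c).hasFDerivAt (x := x)
    have h4 := h2.add h3
    refine h4.congr_fderiv ?_
    ext v
    simp only [ContinuousLinearMap.add_apply, ContinuousLinearMap.comp_apply,
      ContinuousLinearMap.smul_apply, ContinuousLinearMap.coe_smul', Pi.smul_apply,
      ContinuousLinearMap.coe_id', id_eq, innerSL_apply_apply, toDual_apply_apply,
      inner_add_left, hgradf, _root_.map_smul, smul_eq_mul]
    ring
  have hFd : ∀ x : (EuclideanSpace ℝ (Fin m)), HasFDerivAt Fobj (toDual ℝ (EuclideanSpace ℝ (Fin m)) (T x + (∇ f (mid x) + c))) x := by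
    intro x
    have := (hQd x).add (hRd x)
    rw [map_add]
    exact this
  -- convexity
  have hQconv : StrictConvexOn ℝ (Set.univ : Set (EuclideanSpace ℝ (Fin m))) Qf := by
    refine ⟨convex_univ, ?_⟩
    intro x _ y _ hxy a b ha hb hab
    have key := hpos (x - y) (sub_ne_zero.mpr hxy)
    have e2 : ⟪T (x - y), x - y⟫ = ⟪T x, x⟫ - ⟪T x, y⟫ - ⟪T y, x⟫ + ⟪T y, y⟫ := by
      simp only [map_sub, inner_sub_left, inner_sub_right]
      ring
    have e1 : ⟪T (a • x + b • y), a • x + b • y⟫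
        = a * a * ⟪T x, x⟫ + a * b * ⟪T x, y⟫ + b * a * ⟪T y, x⟫ + b * b * ⟪T y, y⟫ := by
      simp only [map_add, _root_.map_smul, inner_add_left, inner_add_right,
        real_inner_smul_left, real_inner_smul_right]
      ring
    have key2 := mul_pos (mul_pos ha hb) key
    rw [e2] at key2
    have hb1 : b = 1 - a := by linarith
    subst hb1
    simp only [hQf, smul_eq_mul]
    rw [e1]
    nlinarith [key2]
  have hRconv : ConvexOn ℝ (Set.univ : Set (EuclideanSpace ℝ (Fin m))) Rf := by
    refine ⟨convex_univ, ?_⟩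
    intro x _ y _ a b ha hb hab
    have hmid2 : mid (a • x + b • y) = a • mid x + b • mid y := by
      simp only [hmid]
      have hmm : a • ((2⁻¹:ℝ) • (x + q)) + b • ((2⁻¹:ℝ) • (y + q))
          = (2⁻¹:ℝ) • (a • x + b • y + (a + b) • q) := by module
      rw [hmm, hab, one_smul]
    have hf2 := hconv.2 (Set.mem_univ (mid x)) (Set.mem_univ (mid y)) ha hb hab
    have hinner2 : ⟪c, a • x + b • y⟫ = a * ⟪c, x⟫ + b * ⟪c, y⟫ := by
      rw [inner_add_right, real_inner_smul_right, real_inner_smul_right]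
    simp only [hRf, smul_eq_mul] at *
    rw [hmid2, hinner2]
    linarith [hf2]
  have hFconv : StrictConvexOn ℝ (Set.univ : Set (EuclideanSpace ℝ (Fin m))) Fobj := by
    have := hQconv.add_convexOn hRconv
    exact this
  -- coercivity constant
  have hmne : Nonempty (Fin m) := ⟨⟨0, hm⟩⟩
  have hsne : (Metric.sphere (0 : EuclideanSpace ℝ (Fin m)) 1).Nonempty := by
    refine ⟨EuclideanSpace.single ⟨0, hm⟩ (1 : ℝ), ?_⟩
    simp [mem_sphere_zero_iff_norm, EuclideanSpace.norm_single]
  have hQcont : Continuous (fun x : EuclideanSpace ℝ (Fin m) => ⟪T x, x⟫) :=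
    T.continuous.inner continuous_id
  obtain ⟨x₀, hx₀mem, hx₀min⟩ :=
    (isCompact_sphere (0 : (EuclideanSpace ℝ (Fin m))) 1).exists_isMinOn hsne
      hQcont.continuousOn
  have hx₀ne : x₀ ≠ 0 := by
    intro h
    rw [h] at hx₀mem
    simp [mem_sphere_zero_iff_norm] at hx₀mem
  set μ := ⟪T x₀, x₀⟫ with hμdef
  have hμpos : 0 < μ := hpos x₀ hx₀ne
  have hμ : ∀ x : (EuclideanSpace ℝ (Fin m)), μ * ‖x‖ ^ 2 ≤ ⟪T x, x⟫ := by
    intro x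
    rcases eq_or_ne x 0 with rfl | hx
    · simp
    · have hxn : (0:ℝ) < ‖x‖ := norm_pos_iff.mpr hx
      have hu : (‖x‖⁻¹ • x) ∈ Metric.sphere (0 : (EuclideanSpace ℝ (Fin m))) 1 := by
        simp [mem_sphere_zero_iff_norm, norm_smul, abs_of_nonneg hxn.le,
          inv_mul_cancel₀ hxn.ne']
      have h1 : ⟪T x₀, x₀⟫ ≤ ⟪T (‖x‖⁻¹ • x), ‖x‖⁻¹ • x⟫ := hx₀min hu
      have h2 : ⟪T (‖x‖⁻¹ • x), ‖x‖⁻¹ • x⟫ = ‖x‖⁻¹ * ‖x‖⁻¹ * ⟪T x, x⟫ := by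
        simp only [_root_.map_smul, real_inner_smul_left, real_inner_smul_right]
        ring
      rw [h2] at h1
      have hx2 : (0:ℝ) < ‖x‖ ^ 2 := by positivity
      have h3 : μ * ‖x‖ ^ 2 ≤ (‖x‖⁻¹ * ‖x‖⁻¹ * ⟪T x, x⟫) * ‖x‖ ^ 2 :=
        mul_le_mul_of_nonneg_right h1 hx2.le
      calc μ * ‖x‖ ^ 2 ≤ (‖x‖⁻¹ * ‖x‖⁻¹ * ⟪T x, x⟫) * ‖x‖ ^ 2 := h3
        _ = (‖x‖⁻¹ * ‖x‖) * ((‖x‖⁻¹ * ‖x‖) * ⟪T x, x⟫) := by ring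
        _ = ⟪T x, x⟫ := by rw [inv_mul_cancel₀ hxn.ne', one_mul, one_mul]
  -- lower bound for Fobj
  have hRgrad : HasGradientAt Rf (∇ f (mid 0) + c) 0 := by
    simpa only [LinearIsometryEquiv.symm_apply_apply] using (hRd 0).hasGradientAt
  set g₀ : (EuclideanSpace ℝ (Fin m)) := ∇ f (mid 0) + c with hg₀
  have hfocR : ∀ y : (EuclideanSpace ℝ (Fin m)), Rf 0 + ⟪g₀, y⟫ ≤ Rf y := by
    intro y
    simpa using foc_aux hRconv hRgrad y
  have hlow : ∀ y : (EuclideanSpace ℝ (Fin m)), 2⁻¹ * (μ * ‖y‖ ^ 2) - ‖g₀‖ * ‖y‖ + Rf 0 ≤ Fobj y := by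
    intro y
    have h1 := hμ y
    have h2 : -(‖g₀‖ * ‖y‖) ≤ ⟪g₀, y⟫ := by
      have ha := abs_real_inner_le_norm g₀ y
      linarith [neg_abs_le (⟪g₀, y⟫ : ℝ)]
    have h3 := hfocR y
    show 2⁻¹ * (μ * ‖y‖ ^ 2) - ‖g₀‖ * ‖y‖ + Rf 0 ≤ 2⁻¹ * ⟪T y, y⟫ + Rf y
    clear_value g₀ μ Fobj Qf Rf mid T Tl
    linarith [h1, h2, h3]
  set Rad : ℝ := (2 / μ) * (‖g₀‖ + |Fobj 0 - Rf 0| + 1) + 1 with hRad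
  clear_value Rad g₀ μ Fobj Qf Rf mid T Tl
  have hRad1 : (1:ℝ) ≤ Rad := by
    have : (0:ℝ) ≤ (2 / μ) * (‖g₀‖ + |Fobj 0 - Rf 0| + 1) := by positivity
    linarith
  have hbig : ∀ y : (EuclideanSpace ℝ (Fin m)), Rad ≤ ‖y‖ → Fobj 0 < Fobj y := by
    intro y hy
    have h1 := hlow y
    have hr1 : (1:ℝ) ≤ ‖y‖ := hRad1.trans hy
    have hK : μ * Rad = 2 * (‖g₀‖ + |Fobj 0 - Rf 0| + 1) + μ := by
      rw [hRad]
      have hμ2 : μ * (2 / μ) = 2 := by field_simp [hμpos.ne']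
      linear_combination (‖g₀‖ + |Fobj 0 - Rf 0| + 1) * hμ2
    have hμr : 2 * (‖g₀‖ + |Fobj 0 - Rf 0| + 1) + μ ≤ μ * ‖y‖ := by
      rw [← hK]
      exact mul_le_mul_of_nonneg_left hy hμpos.le
    nlinarith [le_abs_self (Fobj 0 - Rf 0), norm_nonneg g₀, abs_nonneg (Fobj 0 - Rf 0),
      mul_le_mul_of_nonneg_left hμr (by linarith : (0:ℝ) ≤ ‖y‖)]
  -- existence of a global minimizer
  have hFcont : Continuous Fobj := by
    have hdF : Differentiable ℝ Fobj := fun x => (hFd x).differentiableAt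
    exact hdF.continuous
  obtain ⟨z, hzmem, hzmin⟩ := (isCompact_closedBall (0 : (EuclideanSpace ℝ (Fin m))) Rad).exists_isMinOn
    ⟨0, Metric.mem_closedBall_self (by linarith)⟩ hFcont.continuousOn
  have hglobal : ∀ y : (EuclideanSpace ℝ (Fin m)), Fobj z ≤ Fobj y := by
    intro y
    rcases le_or_gt ‖y‖ Rad with h | h
    · exact hzmin (by simpa [Metric.mem_closedBall, dist_zero_right] using h)
    · exact le_of_lt (lt_of_le_of_lt
        (hzmin (Metric.mem_closedBall_self (by linarith))) (hbig y h.le))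
  have hcrit : T z + (∇ f (mid z) + c) = 0 := by
    have hminon : IsMinOn Fobj Set.univ z := isMinOn_iff.mpr fun y _ => hglobal y
    have hloc : IsLocalMin Fobj z := hminon.isLocalMin (by simp)
    have h0 := hloc.hasFDerivAt_eq_zero (hFd z)
    have h2 : toDual ℝ (EuclideanSpace ℝ (Fin m)) (T z + (∇ f (mid z) + c)) = toDual ℝ (EuclideanSpace ℝ (Fin m)) 0 := by
      rw [h0, map_zero]
    exact (toDual ℝ (EuclideanSpace ℝ (Fin m))).injective h2
  -- reformulating the condition
  have hcond : ∀ qp : (EuclideanSpace ℝ (Fin m)),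
      (∀ a, (G *ᵥ fun b => qp b) a + ∇ f ((2⁻¹ : ℝ) • (qp + q)) a + c a = 0)
        ↔ T qp + (∇ f (mid qp) + c) = 0 := by
    intro qp
    constructor
    · intro h
      ext a
      have := h a
      simp only [PiLp.add_apply, PiLp.zero_apply, hTapp]
      rw [hmid]
      linarith [this]
    · intro h a
      have := congrFun (congrArg (fun (v : (EuclideanSpace ℝ (Fin m))) (i : Fin m) => v i) h) a
      simp only [PiLp.add_apply, PiLp.zero_apply, hTapp] at this
      rw [hmid] at this
      linarith [this]
  refine ⟨z, (hcond z).mpr hcrit, ?_⟩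
  intro y hy
  have hyc := (hcond y).mp hy
  by_contra hne
  have hgy : HasGradientAt Fobj 0 y := by
    have h := (hFd y).hasGradientAt
    rw [hyc] at h
    simpa using h
  have hminy : ∀ w, Fobj y ≤ Fobj w := by
    intro w
    have := foc_aux hFconv.convexOn hgy w
    simpa using this
  have h1 : Fobj y ≤ Fobj z := hminy z
  have h2 : Fobj z ≤ Fobj y := hglobal y
  have hmidlt := hFconv.2 (Set.mem_univ y) (Set.mem_univ z) hne
    (by norm_num : (0:ℝ) < 2⁻¹) (by norm_num : (0:ℝ) < 2⁻¹) (by norm_num)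
  have h3 := hminy ((2⁻¹ : ℝ) • y + (2⁻¹ : ℝ) • z)
  simp only [smul_eq_mul] at hmidlt
  linarith
end

section
/- Let Q ∈ ℝⁿˣⁿ be symmetric positive semidefinite and τ > 0. Then the block matrix [[I/τ + Q, Q], [−Q, I/τ]] is invertible, and its inverse equals blockdiag-multiplication by Λ(τ)^{-1} of [[I/τ, −Q], [Q, I/τ + Q]], where Λ(τ) = (1/τ²)I + (1/τ)Q + Q². That is, [[I/τ + Q, Q], [−Q, I/τ]]^{-1} = (I₂ ⊗ Λ(τ)^{-1}) · [[I/τ, −Q], [Q, I/τ + Q]]. -/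
open Matrix

/-- The block matrix `[[I/τ + Q, Q], [−Q, I/τ]]` is invertible with
inverse `(I₂ ⊗ Λ(τ)⁻¹) · [[I/τ, −Q], [Q, I/τ + Q]]` where
`Λ(τ) = (1/τ²)I + (1/τ)Q + Q²`. -/
theorem block_matrix_inverse (n : ℕ)
    (Q : Matrix (Fin n) (Fin n) ℝ) (hQ : Q.PosSemidef)
    (τ : ℝ) (hτ : 0 < τ)
    (Λ : Matrix (Fin n) (Fin n) ℝ)
    (hΛ : Λ = (τ ^ 2)⁻¹ • (1 : Matrix (Fin n) (Fin n) ℝ) + τ⁻¹ • Q + Q ^ 2)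
    (B : Matrix (Fin n ⊕ Fin n) (Fin n ⊕ Fin n) ℝ)
    (hB : B = Matrix.fromBlocks
      (τ⁻¹ • (1 : Matrix (Fin n) (Fin n) ℝ) + Q) Q (-Q)
      (τ⁻¹ • (1 : Matrix (Fin n) (Fin n) ℝ))) :
    IsUnit B.det ∧
    B⁻¹ = Matrix.fromBlocks
      (Λ⁻¹ * (τ⁻¹ • (1 : Matrix (Fin n) (Fin n) ℝ))) (Λ⁻¹ * (-Q))
      (Λ⁻¹ * Q) (Λ⁻¹ * (τ⁻¹ • (1 : Matrix (Fin n) (Fin n) ℝ) + Q)) := by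
  set s : Matrix (Fin n) (Fin n) ℝ := τ⁻¹ • (1 : Matrix (Fin n) (Fin n) ℝ) with hs
  -- Λ is positive definite
  have h1pd : ((τ ^ 2)⁻¹ • (1 : Matrix (Fin n) (Fin n) ℝ)).PosDef := by
    refine Matrix.posDef_iff_dotProduct_mulVec.mpr ⟨?_, fun x hx => ?_⟩
    · simp [Matrix.IsHermitian]
    · have : ((τ ^ 2)⁻¹ • (1 : Matrix (Fin n) (Fin n) ℝ)) *ᵥ x = (τ ^ 2)⁻¹ • x := by
        simp [Matrix.smul_mulVec]
      rw [this, dotProduct_smul]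
      have hx0 : 0 < star x ⬝ᵥ x := Matrix.dotProduct_star_self_pos_iff.mpr hx
      have : (0:ℝ) < (τ ^ 2)⁻¹ := by positivity
      exact mul_pos this hx0
  have hQs : (τ⁻¹ • Q).PosSemidef := by
    refine Matrix.posSemidef_iff_dotProduct_mulVec.mpr ⟨?_, fun x => ?_⟩
    · have := hQ.1
      simpa [Matrix.IsHermitian] using congrArg (fun M => τ⁻¹ • M) this
    · have : (τ⁻¹ • Q) *ᵥ x = τ⁻¹ • (Q *ᵥ x) := by simp [Matrix.smul_mulVec]
      rw [this, dotProduct_smul]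
      have := (Matrix.posSemidef_iff_dotProduct_mulVec.mp hQ).2 x
      positivity
  have hQ2 : (Q ^ 2).PosSemidef := by
    have : Q ^ 2 = Qᴴ * Q := by rw [hQ.1, sq Q]
    rw [this]
    exact Matrix.posSemidef_conjTranspose_mul_self Q
  have hΛpd : Λ.PosDef := by
    rw [hΛ]
    exact (h1pd.add_posSemidef hQs).add_posSemidef hQ2
  have hdet : IsUnit Λ.det := isUnit_iff_ne_zero.mpr hΛpd.det_pos.ne'
  have hinv : Λ⁻¹ * Λ = 1 := Matrix.nonsing_inv_mul Λ hdet
  -- express Λ in terms of s and Q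
  have hsQ : s * Q = τ⁻¹ • Q := by rw [hs, Matrix.smul_mul, one_mul]
  have hQs' : Q * s = τ⁻¹ • Q := by rw [hs, Matrix.mul_smul, mul_one]
  have hss : s * s = (τ ^ 2)⁻¹ • (1 : Matrix (Fin n) (Fin n) ℝ) := by
    rw [hs, Matrix.smul_mul, Matrix.mul_smul, one_mul, smul_smul, sq, mul_inv]
  have hΛ' : Λ = s * s + s * Q + Q * Q := by rw [hΛ, hss, hsQ, sq Q]
  have hcomm : Q * s = s * Q := by rw [hsQ, hQs']
  -- the claimed inverse is a left inverse
  set C : Matrix (Fin n ⊕ Fin n) (Fin n ⊕ Fin n) ℝ := Matrix.fromBlocks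
      (Λ⁻¹ * s) (Λ⁻¹ * (-Q)) (Λ⁻¹ * Q) (Λ⁻¹ * (s + Q)) with hC
  have h11 : Λ⁻¹ * s * (s + Q) + Λ⁻¹ * (-Q) * (-Q) = 1 := by
    calc Λ⁻¹ * s * (s + Q) + Λ⁻¹ * (-Q) * (-Q)
        = Λ⁻¹ * (s * s + s * Q + Q * Q) := by noncomm_ring
      _ = Λ⁻¹ * Λ := by rw [hΛ']
      _ = 1 := hinv
  have h12 : Λ⁻¹ * s * Q + Λ⁻¹ * (-Q) * s = 0 := by
    calc Λ⁻¹ * s * Q + Λ⁻¹ * (-Q) * s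
        = Λ⁻¹ * (s * Q) - Λ⁻¹ * (Q * s) := by noncomm_ring
      _ = 0 := by rw [hcomm, sub_self]
  have h21 : Λ⁻¹ * Q * (s + Q) + Λ⁻¹ * (s + Q) * (-Q) = 0 := by
    calc Λ⁻¹ * Q * (s + Q) + Λ⁻¹ * (s + Q) * (-Q)
        = Λ⁻¹ * (Q * s) - Λ⁻¹ * (s * Q) := by noncomm_ring
      _ = 0 := by rw [hcomm, sub_self]
  have h22 : Λ⁻¹ * Q * Q + Λ⁻¹ * (s + Q) * s = 1 := by
    calc Λ⁻¹ * Q * Q + Λ⁻¹ * (s + Q) * s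
        = Λ⁻¹ * (s * s + Q * s + Q * Q) := by noncomm_ring
      _ = Λ⁻¹ * (s * s + s * Q + Q * Q) := by rw [hcomm]
      _ = Λ⁻¹ * Λ := by rw [hΛ']
      _ = 1 := hinv
  have hCB : C * B = 1 := by
    rw [hC, hB, Matrix.fromBlocks_multiply, h11, h12, h21, h22,
      Matrix.fromBlocks_one]
  exact ⟨Matrix.isUnit_det_of_left_inverse hCB, Matrix.inv_eq_left_inv hCB⟩
end
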